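/- Let k be a field of characteristic 0, let φ₄ ∈ k[x₁,x₂,x₃] be homogeneous of degree 4 (possibly zero), let φ₆ ∈ k[x₁,x₂,x₃] be homogeneous of degree 6, and set D := 4φ₄³ + 27φ₆². Let a ∈ k³ be a point with φ₆(a) ≠ 0. Then the following are equivalent: (i) there exists b ∈ k such that (a₁,a₂,a₃,b,0) is a singular point of the associated sextic f = z² + y³ + y·φ₄ + φ₆; (ii) ∂D/∂xᵢ(a) = 0 for i = 1,2,3. Moreover, in this case D(a) = 0, and the unique such b equals 2φ₄(a)²/(9φ₆(a)). (This identifies the singular points of the double Veronese cone lying outside Λ₆ = {φ₆ = 0} with the singular points of the discriminant curve 𝔇 = {D = 0} outside Λ₆.) -/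

import Mathlib

open MvPolynomial

/-- The associated sextic `f = z² + y³ + y·φ₄ + φ₆` in `k[x₁,x₂,x₃,y,z]`,
with variables indexed by `Fin 5` (x₁,x₂,x₃ = X 0, X 1, X 2; y = X 3; z = X 4). -/
noncomputable def sextic {k : Type*} [CommRing k] (φ₄ φ₆ : MvPolynomial (Fin 3) k) :
    MvPolynomial (Fin 5) k :=
  X 4 ^ 2 + X 3 ^ 3 + X 3 * rename (Fin.castLE (by norm_num)) φ₄ +
    rename (Fin.castLE (by norm_num)) φ₆

/-- `P` is a singular point of `f`: `f` and all its partial derivatives vanish at `P`. -/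
def IsSingularPt {k : Type*} [CommRing k] (f : MvPolynomial (Fin 5) k) (P : Fin 5 → k) : Prop :=
  eval P f = 0 ∧ ∀ i : Fin 5, eval P (pderiv i f) = 0

lemma euler {σ : Type*} [Fintype σ] [DecidableEq σ] {k : Type*} [CommRing k] {n : ℕ}
    {p : MvPolynomial σ k} (hp : p.IsHomogeneous n) :
    ∑ i, X i * pderiv i p = (n : MvPolynomial σ k) * p := by
  conv_lhs => rw [p.as_sum]
  conv_rhs => rw [p.as_sum]
  simp only [map_sum, Finset.mul_sum]
  rw [Finset.sum_comm]
  refine Finset.sum_congr rfl fun d hd => ?_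
  have hdeg : d.degree = n := by
    have h := hp (mem_support_iff.mp hd); rw [Finsupp.degree_eq_weight_one]; exact h
  calc ∑ i, X i * pderiv i (monomial d (coeff d p))
      = ∑ i, monomial d ((d i : k) * coeff d p) := by
        refine Finset.sum_congr rfl fun i _ => ?_
        rw [pderiv_monomial]
        rcases Nat.eq_zero_or_pos (d i) with h | h
        · simp [h]
        · have hD : d - Finsupp.single i 1 + Finsupp.single i 1 = d := by
            ext j
            by_cases hj : j = i
            · subst hj; simp [Finsupp.single_apply]; omega
            · simp [Finsupp.single_apply, (Ne.symm hj : i ≠ j)]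
          rw [X, monomial_mul, one_mul, add_comm, hD, mul_comm]
    _ = monomial d ((∑ i, (d i : k)) * coeff d p) := by
        rw [Finset.sum_mul, map_sum]
    _ = (n : MvPolynomial σ k) * monomial d (coeff d p) := by
        rw [← C_eq_coe_nat, C_mul_monomial]
        congr 1
        rw [← hdeg, Finsupp.degree_apply, Finset.sum_subset (Finset.subset_univ d.support)
          (by intro x _ hx; simpa using Finsupp.notMem_support_iff.mp hx)]
        push_cast
        ring


/-- Outside `Λ₆ = {φ₆ = 0}`, singular points of the sextic correspond exactly to
singular points of the discriminant `D = 4φ₄³ + 27φ₆²`; at such a point `D(a) = 0`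
and the `y`-coordinate equals `2φ₄(a)²/(9φ₆(a))`. -/
theorem stmt_2 {k : Type*} [Field k] [CharZero k]
    (φ₄ φ₆ : MvPolynomial (Fin 3) k)
    (h4 : φ₄.IsHomogeneous 4) (h6 : φ₆.IsHomogeneous 6)
    (a : Fin 3 → k) (ha : eval a φ₆ ≠ 0) :
    ((∃ b : k, IsSingularPt (sextic φ₄ φ₆) ![a 0, a 1, a 2, b, 0]) ↔
      ∀ i : Fin 3, eval a (pderiv i (4 * φ₄ ^ 3 + 27 * φ₆ ^ 2)) = 0) ∧
    ((∃ b : k, IsSingularPt (sextic φ₄ φ₆) ![a 0, a 1, a 2, b, 0]) →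
      eval a (4 * φ₄ ^ 3 + 27 * φ₆ ^ 2) = 0 ∧
      ∀ b : k, IsSingularPt (sextic φ₄ φ₆) ![a 0, a 1, a 2, b, 0] →
        b = 2 * (eval a φ₄) ^ 2 / (9 * eval a φ₆)) := by
  set p4 := eval a φ₄ with hp4def
  set p6 := eval a φ₆ with hp6def
  set d4 : Fin 3 → k := fun j => eval a (pderiv j φ₄) with hd4def
  set d6 : Fin 3 → k := fun j => eval a (pderiv j φ₆) with hd6def
  -- evaluation helpers
  have hcomp : ∀ (b : k) (h : 3 ≤ 5) (φ : MvPolynomial (Fin 3) k),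
      eval ![a 0, a 1, a 2, b, 0] (rename (Fin.castLE h) φ) = eval a φ := by
    intro b h φ
    rw [eval_rename, show (![a 0, a 1, a 2, b, 0] : Fin 5 → k) ∘ Fin.castLE h = a by
      ext i; fin_cases i <;> rfl]
  have hz : ∀ (h : 3 ≤ 5) (φ : MvPolynomial (Fin 3) k) (j : Fin 5), 3 ≤ (j : ℕ) →
      pderiv j (rename (Fin.castLE h) φ) = 0 := by
    intro h φ j hj
    apply pderiv_eq_zero_of_notMem_vars
    intro hmem
    have := vars_rename _ φ hmem
    simp only [Finset.mem_image] at this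
    obtain ⟨i, _, rfl⟩ := this
    simp [Fin.castLE] at hj
    omega
  have hz3 : ∀ (h : 3 ≤ 5) (φ : MvPolynomial (Fin 3) k),
      pderiv (3 : Fin 5) (rename (Fin.castLE h) φ) = 0 := fun h φ => hz h φ 3 (by decide)
  have hz4 : ∀ (h : 3 ≤ 5) (φ : MvPolynomial (Fin 3) k),
      pderiv (4 : Fin 5) (rename (Fin.castLE h) φ) = 0 := fun h φ => hz h φ 4 (by decide)
  have hcast : ∀ (h : 3 ≤ 5) (j : Fin 3) (φ : MvPolynomial (Fin 3) k),
      pderiv (Fin.castLE h j) (rename (Fin.castLE h) φ) = rename (Fin.castLE h) (pderiv j φ) :=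
    fun h j φ => pderiv_rename (Fin.castLE_injective h) j φ
  have ef : ∀ b : k, eval ![a 0, a 1, a 2, b, 0] (sextic φ₄ φ₆) = b ^ 3 + b * p4 + p6 := by
    intro b
    simp [sextic, hcomp, hp4def, hp6def]
  have e3 : ∀ b : k, eval ![a 0, a 1, a 2, b, 0] (pderiv (3 : Fin 5) (sextic φ₄ φ₆)) =
      3 * b ^ 2 + p4 := by
    intro b
    simp [sextic, pderiv_mul, pderiv_pow, hz3, hcomp, hp4def]
  have e4 : ∀ b : k, eval ![a 0, a 1, a 2, b, 0] (pderiv (4 : Fin 5) (sextic φ₄ φ₆)) = 0 := by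
    intro b
    simp [sextic, pderiv_mul, pderiv_pow, hz4, hcomp]
  have ex : ∀ (b : k) (h : 3 ≤ 5) (j : Fin 3),
      eval ![a 0, a 1, a 2, b, 0] (pderiv (Fin.castLE h j) (sextic φ₄ φ₆)) =
        b * d4 j + d6 j := by
    intro b h j
    have hne3 : (3 : Fin 5) ≠ Fin.castLE h j := by
      have := j.isLt; simp [Fin.ext_iff]; omega
    have hne4 : (4 : Fin 5) ≠ Fin.castLE h j := by
      have := j.isLt; simp [Fin.ext_iff]; omega
    simp [sextic, pderiv_mul, pderiv_pow, pderiv_X_of_ne hne3, pderiv_X_of_ne hne4,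
      hcast, hcomp, hd4def, hd6def]
  -- characterization of singular points
  have hsing : ∀ b : k, IsSingularPt (sextic φ₄ φ₆) ![a 0, a 1, a 2, b, 0] ↔
      (b ^ 3 + b * p4 + p6 = 0 ∧ 3 * b ^ 2 + p4 = 0 ∧
        ∀ j : Fin 3, b * d4 j + d6 j = 0) := by
    intro b
    constructor
    · rintro ⟨h1, h2⟩
      refine ⟨by rw [← ef b]; exact h1, by rw [← e3 b]; exact h2 3, fun j => ?_⟩
      rw [← ex b (by norm_num) j]; exact h2 (Fin.castLE (by norm_num) j)
    · rintro ⟨h1, h2, h3⟩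
      refine ⟨(ef b).trans h1, fun i => ?_⟩
      fin_cases i
      · exact (ex b (by norm_num) 0).trans (h3 0)
      · exact (ex b (by norm_num) 1).trans (h3 1)
      · exact (ex b (by norm_num) 2).trans (h3 2)
      · exact (e3 b).trans h2
      · exact e4 b
  -- evaluation of the discriminant and its derivatives
  have eDD : eval a (4 * φ₄ ^ 3 + 27 * φ₆ ^ 2) = 4 * p4 ^ 3 + 27 * p6 ^ 2 := by simp [hp4def, hp6def]
  have eD : ∀ j : Fin 3, eval a (pderiv j (4 * φ₄ ^ 3 + 27 * φ₆ ^ 2)) =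
      12 * p4 ^ 2 * d4 j + 54 * p6 * d6 j := by
    intro j
    have c4 : pderiv j (4 : MvPolynomial (Fin 3) k) = 0 := by
      rw [show (4 : MvPolynomial (Fin 3) k) = C (4 : k) from (map_ofNat C 4).symm]; exact pderiv_C
    have c27 : pderiv j (27 : MvPolynomial (Fin 3) k) = 0 := by
      rw [show (27 : MvPolynomial (Fin 3) k) = C (27 : k) from (map_ofNat C 27).symm]; exact pderiv_C
    simp [pderiv_mul, pderiv_pow, c4, c27, hd4def, hd6def]
    ring
  -- from a singular point: the algebraic consequences
  have key : ∀ b : k, (b ^ 3 + b * p4 + p6 = 0 ∧ 3 * b ^ 2 + p4 = 0 ∧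
      ∀ j : Fin 3, b * d4 j + d6 j = 0) →
      p4 = -3 * b ^ 2 ∧ p6 = 2 * b ^ 3 ∧ b ≠ 0 := by
    rintro b ⟨h1, h2, _⟩
    have hp4b : p4 = -3 * b ^ 2 := by linear_combination h2
    have hp6b : p6 = 2 * b ^ 3 := by linear_combination h1 - b * hp4b
    refine ⟨hp4b, hp6b, fun hb => ha ?_⟩
    show p6 = 0
    rw [hp6b, hb]; ring
  -- homogeneity of the discriminant, hence Euler ⇒ D(a)=0 given vanishing gradient
  have hDhom : (4 * φ₄ ^ 3 + 27 * φ₆ ^ 2 : MvPolynomial (Fin 3) k).IsHomogeneous 12 := by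
    have hC4 : (4 : MvPolynomial (Fin 3) k).IsHomogeneous 0 := by
      rw [show (4 : MvPolynomial (Fin 3) k) = C (4 : k) from (map_ofNat C 4).symm]
      exact isHomogeneous_C _ _
    have hC27 : (27 : MvPolynomial (Fin 3) k).IsHomogeneous 0 := by
      rw [show (27 : MvPolynomial (Fin 3) k) = C (27 : k) from (map_ofNat C 27).symm]
      exact isHomogeneous_C _ _
    have := (hC4.mul (h4.pow 3)).add (hC27.mul (h6.pow 2))
    simpa using this
  constructor
  · constructor
    · rintro ⟨b, hb⟩
      obtain ⟨h1, h2, h3⟩ := (hsing b).mp hb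
      obtain ⟨hp4b, hp6b, hbne⟩ := key b ⟨h1, h2, h3⟩
      intro j
      rw [eD j]
      linear_combination 108 * b ^ 3 * (h3 j) + 12 * (d4 j) * (p4 - 3 * b ^ 2) * hp4b +
        54 * (d6 j) * hp6b
    · intro hD
      -- Euler gives D(a) = 0
      have hDa : 4 * p4 ^ 3 + 27 * p6 ^ 2 = 0 := by
        have h := congrArg (eval a) (euler hDhom)
        simp only [map_sum, map_mul, eval_X, map_natCast, hD, mul_zero,
          Finset.sum_const_zero] at h
        rw [eDD] at h
        have h12 : (12 : k) ≠ 0 := by norm_num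
        have := (mul_eq_zero.mp h.symm).resolve_left h12
        linear_combination this
      have hp4ne : p4 ≠ 0 := by
        intro h0
        apply ha
        show p6 = 0
        have h27 : p6 ^ 2 = 0 := by
          linear_combination (1/27 : k) * hDa - (4/27 * p4 ^ 2) * h0
        exact pow_eq_zero_iff (by norm_num) |>.mp h27
      set b := 2 * p4 ^ 2 / (9 * p6) with hbdef
      have h9p6 : (9 : k) * p6 ≠ 0 := mul_ne_zero (by norm_num) ha
      have hb2 : 9 * p6 * b = 2 * p4 ^ 2 := by
        rw [hbdef]; field_simp
      have h2 : 3 * b ^ 2 + p4 = 0 := by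
        have hsq : (9 * p6) ^ 2 * (3 * b ^ 2 + p4) = 0 := by
          linear_combination (3 * (9 * p6 * b) + 6 * p4 ^ 2) * hb2 + 3 * p4 * hDa
        exact (mul_eq_zero.mp hsq).resolve_left (pow_ne_zero 2 h9p6)
      have hp4b : p4 = -3 * b ^ 2 := by linear_combination h2
      have hbne : b ≠ 0 := by
        rw [hbdef]
        exact div_ne_zero (mul_ne_zero two_ne_zero (pow_ne_zero 2 hp4ne)) h9p6
      have hp6b : p6 = 2 * b ^ 3 := by
        have h9b : 9 * b * (p6 - 2 * b ^ 3) = 0 := by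
          linear_combination hb2 + (2 * p4 - 6 * b ^ 2) * hp4b
        have h9bne : (9 : k) * b ≠ 0 := mul_ne_zero (by norm_num) hbne
        have := (mul_eq_zero.mp h9b).resolve_left h9bne
        linear_combination this
      have h1 : b ^ 3 + b * p4 + p6 = 0 := by
        rw [hp4b, hp6b]; ring
      refine ⟨b, (hsing b).mpr ⟨h1, h2, fun j => ?_⟩⟩
      have hDj := hD j
      rw [eD j] at hDj
      have h108 : 108 * b ^ 3 * (b * d4 j + d6 j) = 0 := by
        linear_combination hDj + (-12 * (d4 j) * (p4 - 3 * b ^ 2)) * hp4b +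
          (-54 * (d6 j)) * hp6b
      have h108ne : (108 : k) * b ^ 3 ≠ 0 :=
        mul_ne_zero (by norm_num) (pow_ne_zero 3 hbne)
      exact (mul_eq_zero.mp h108).resolve_left h108ne
  · rintro ⟨b, hb⟩
    obtain ⟨h1, h2, h3⟩ := (hsing b).mp hb
    obtain ⟨hp4b, hp6b, hbne⟩ := key b ⟨h1, h2, h3⟩
    constructor
    · rw [eDD, hp4b, hp6b]; ring
    · intro b' hb'
      obtain ⟨h1', h2', h3'⟩ := (hsing b').mp hb'
      obtain ⟨hp4b', hp6b', hbne'⟩ := key b' ⟨h1', h2', h3'⟩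
      rw [hp4b', hp6b']
      field_simp
      ring
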